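/- Assume M is a cancellative monoid and S quasi-spans M. Then for all x, y, z in M: (i) y \triangleright_S z implies xy \triangleright_S z; (ii) the conjunction of x \triangleright_S y and y \triangleright_S z implies x \triangleright_S yz. Consequently, a sequence (x_1, ..., x_n) is S-prenormal if and only if x_i \triangleright_S x_{i+1} holds for each i < n. -/

import Mathlib

open scoped Pointwise

variable {M : Type*} [Monoid M]

/-- `x` is a left divisor of `y`. -/
def LDvd (x y : M) : Prop := ∃ c, y = x * c

/-- `x` is a proper left divisor of `y`. -/
def PDvd (x y : M) : Prop := ∃ c, ¬ IsUnit c ∧ y = x * c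

/-- `x ≃ y`: `y = x * u` for some unit `u`. -/
def AssocU (x y : M) : Prop := ∃ u : M, IsUnit u ∧ y = x * u

/-- The set of units of a monoid. -/
def UnitsSet (N : Type*) [Monoid N] : Set N := {u : N | IsUnit u}

/-- `S` spans `M` (Definition 2.2). -/
def Spans (S : Set M) : Prop :=
  Submonoid.closure S = ⊤ ∧ (1 : M) ∈ S ∧
  (∀ x ∈ S, ∀ u : M, IsUnit u → x * u ∈ S) ∧
  ∀ x ∈ S, ∀ y ∈ S, ∀ z : M, LDvd x z → LDvd y z →
    ∃ x' ∈ S, ∃ y' ∈ S, x * y' = y * x' ∧ LDvd (x * y') z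

/-- `S` quasi-spans `M`: `S M^*` spans `M`. -/
def QuasiSpans (S : Set M) : Prop := Spans (S * UnitsSet M)

/-- Condition (2.2). -/
def Cond22 (S : Set M) : Prop :=
  ∀ x ∈ S, ∀ y ∈ S, ∀ x'' y'' : M, x * y'' = y * x'' →
    ∃ x' ∈ S, ∃ y' ∈ S, ∃ z : M, x * y' = y * x' ∧ x'' = x' * z ∧ y'' = y' * z

/-- `x` is an atom: not a unit, and in any factorization one factor is a unit. -/
def IsAtomM (x : M) : Prop := ¬ IsUnit x ∧ ∀ y z : M, x = y * z → IsUnit y ∨ IsUnit z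

/-- `z` is a minimal common right multiple (mcm) of `x` and `y`. -/
def Mcm (x y z : M) : Prop :=
  LDvd x z ∧ LDvd y z ∧ ∀ z', PDvd z' z → ¬ (LDvd x z' ∧ LDvd y z')

/-- `x` is `S`-simple. -/
def SSimple (S : Set M) (x : M) : Prop :=
  ∀ y, PDvd y x → {d : M | LDvd d y} ∩ S ≠ {d : M | LDvd d x} ∩ S

/-- `x` covers `y` with respect to `S`: `Div(xy) ∩ S = Div(x) ∩ S`. -/
def Covers (S : Set M) (x y : M) : Prop :=
  {d : M | LDvd d (x * y)} ∩ S = {d : M | LDvd d x} ∩ S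

/-- A sequence is `S`-prenormal: each entry has the same divisors in `S`
as the product of the remaining entries. -/
def Prenormal (S : Set M) (l : List M) : Prop :=
  ∀ i (h : i < l.length),
    {d : M | LDvd d (l.get ⟨i, h⟩)} ∩ S = {d : M | LDvd d ((l.drop i).prod)} ∩ S

lemma ldvd_trans {x y z : M} (h1 : LDvd x y) (h2 : LDvd y z) : LDvd x z := by
  obtain ⟨c, rfl⟩ := h1; obtain ⟨d, rfl⟩ := h2; exact ⟨c * d, mul_assoc x c d⟩

lemma ldvd_mul {x y : M} (c : M) (h : LDvd x y) : LDvd x (y * c) :=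
  ldvd_trans h ⟨c, rfl⟩

lemma covers_iff (S : Set M) (x y : M) :
    Covers S x y ↔ ∀ s ∈ S, LDvd s (x * y) → LDvd s x := by
  constructor
  · intro h s hs hd
    have hmem : s ∈ {d : M | LDvd d (x * y)} ∩ S := ⟨hd, hs⟩
    rw [h] at hmem; exact hmem.1
  · intro h
    ext d
    simp only [Set.mem_inter_iff, Set.mem_setOf_eq]
    exact ⟨fun ⟨hd, hs⟩ => ⟨h d hs hd, hs⟩, fun ⟨hd, hs⟩ => ⟨ldvd_mul y hd, hs⟩⟩

lemma mem_SU {S : Set M} {s : M} (hs : s ∈ S) : s ∈ S * UnitsSet M :=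
  ⟨s, hs, 1, isUnit_one, mul_one s⟩

/-- Key lemma: if `s ∈ S·M*` left-divides `a*b`, then there is `t ∈ S`
left-dividing `b` with `s` left-dividing `a*t`. -/
lemma key (hl : ∀ a b c : M, a * b = a * c → b = c)
    (S : Set M) (hS : QuasiSpans S) (a : M) :
    ∀ s ∈ S * UnitsSet M, ∀ b : M, LDvd s (a * b) → ∃ t ∈ S, LDvd t b ∧ LDvd s (a * t) := by
  obtain ⟨hcl, -, -, hcond⟩ := hS
  have ha : a ∈ Submonoid.closure (S * UnitsSet M) := by rw [hcl]; exact Submonoid.mem_top a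
  induction ha using Submonoid.closure_induction with
  | mem a ha =>
    intro s hs b hsab
    obtain ⟨a'', ha'', s'', hs'', heq, hdvd⟩ :=
      hcond a ha s hs (a * b) ⟨b, rfl⟩ hsab
    obtain ⟨c, hc⟩ := hdvd
    have hb : b = s'' * c := hl a _ _ (by rw [hc, mul_assoc])
    obtain ⟨t, ht, u, hu, htu⟩ := hs''
    obtain ⟨v, huv, -⟩ := isUnit_iff_exists.mp hu
    refine ⟨t, ht, ⟨u * c, by rw [hb, ← htu, mul_assoc]⟩, ⟨a'' * v, ?_⟩⟩
    have : s * a'' * v = a * t := by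
      rw [← heq, ← htu]
      show a * (t * u) * v = a * t
      rw [mul_assoc a, mul_assoc t, huv, mul_one]
    rw [← this, mul_assoc]
  | one =>
    intro s hs b hsb
    obtain ⟨t, ht, u, hu, htu⟩ := hs
    obtain ⟨v, huv, -⟩ := isUnit_iff_exists.mp hu
    refine ⟨t, ht, ?_, ⟨v, ?_⟩⟩
    · refine ldvd_trans ⟨u, htu.symm⟩ ?_
      rw [one_mul] at hsb; exact hsb
    · rw [one_mul, ← htu, mul_assoc, huv, mul_one]
  | mul a₁ a₂ _ _ ih1 ih2 =>
    intro s hs b hsab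
    have h1 : LDvd s (a₁ * (a₂ * b)) := by rw [← mul_assoc]; exact hsab
    obtain ⟨t₁, ht₁, hdt₁, hst₁⟩ := ih1 s hs (a₂ * b) h1
    obtain ⟨t₂, ht₂, hdt₂, ht₁t₂⟩ := ih2 t₁ (mem_SU ht₁) b hdt₁
    refine ⟨t₂, ht₂, hdt₂, ?_⟩
    have : LDvd (a₁ * t₁) (a₁ * (a₂ * t₂)) := by
      obtain ⟨c, hc⟩ := ht₁t₂
      exact ⟨c, by rw [hc, mul_assoc]⟩
    rw [mul_assoc]
    exact ldvd_trans hst₁ this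

theorem stmt18
    (hl : ∀ a b c : M, a * b = a * c → b = c)
    (hr : ∀ a b c : M, b * a = c * a → b = c)
    (S : Set M) (hS : QuasiSpans S) :
    (∀ x y z : M, Covers S y z → Covers S (x * y) z) ∧
    (∀ x y z : M, Covers S x y → Covers S y z → Covers S x (y * z)) ∧
    (∀ l : List M, Prenormal S l ↔
      ∀ i (h : i + 1 < l.length),
        Covers S (l.get ⟨i, Nat.lt_of_succ_lt h⟩) (l.get ⟨i + 1, h⟩)) := by
  clear hr
  have part1 : ∀ x y z : M, Covers S y z → Covers S (x * y) z := by
    intro x y z hyz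
    rw [covers_iff] at hyz ⊢
    intro s hs hd
    have hd' : LDvd s (x * (y * z)) := by rw [← mul_assoc]; exact hd
    obtain ⟨t, ht, htd, hst⟩ := key hl S hS x s (mem_SU hs) (y * z) hd'
    have hty : LDvd t y := hyz t ht htd
    refine ldvd_trans hst ?_
    obtain ⟨c, hc⟩ := hty
    exact ⟨c, by rw [hc, mul_assoc]⟩
  have part2 : ∀ x y z : M, Covers S x y → Covers S y z → Covers S x (y * z) := by
    intro x y z hxy hyz
    have hxyz := part1 x y z hyz
    rw [covers_iff] at hxy hxyz ⊢
    intro s hs hd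
    have hd' : LDvd s (x * y * z) := by rw [mul_assoc]; exact hd
    exact hxy s hs (hxyz s hs hd')
  have chain : ∀ l : List M,
      (∀ i (h : i + 1 < l.length),
        Covers S (l.get ⟨i, Nat.lt_of_succ_lt h⟩) (l.get ⟨i + 1, h⟩)) →
      ∀ i (h : i < l.length), Covers S (l.get ⟨i, h⟩) ((l.drop (i + 1)).prod) := by
    intro l
    induction l with
    | nil => intro _ i h; exact absurd h (Nat.not_lt_zero i)
    | cons x l ih =>
      intro hp i h
      have hptail : ∀ i (h : i + 1 < l.length),
          Covers S (l.get ⟨i, Nat.lt_of_succ_lt h⟩) (l.get ⟨i + 1, h⟩) := by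
        intro i h
        have := hp (i + 1) (Nat.succ_lt_succ h)
        simpa using this
      cases i with
      | zero =>
        simp only [List.get, List.drop]
        cases l with
        | nil =>
          simp only [List.prod_nil]
          rw [covers_iff]; intro s hs hd; rwa [mul_one] at hd
        | cons y l' =>
          have h0 : Covers S x y := by
            have := hp 0 (by simp)
            simpa using this
          have h1 : Covers S y l'.prod := by
            have := ih hptail 0 (by simp)
            simpa using this
          rw [List.prod_cons]
          exact part2 x y l'.prod h0 h1
      | succ j =>
        have hj : j < l.length := Nat.lt_of_succ_lt_succ h
        have := ih hptail j hj
        simpa using this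
  have drop_prod_eq : ∀ (l : List M) (i : ℕ) (h : i < l.length),
      (l.drop i).prod = l.get ⟨i, h⟩ * (l.drop (i + 1)).prod := by
    intro l i h
    conv_lhs => rw [← List.getElem_cons_drop h]
    rw [List.prod_cons, List.get_eq_getElem]
  refine ⟨part1, part2, fun l => ⟨?_, ?_⟩⟩
  · intro hpre i h
    rw [covers_iff]
    intro s hs hd
    have hi : i < l.length := Nat.lt_of_succ_lt h
    have hdvd : LDvd s ((l.drop i).prod) := by
      rw [drop_prod_eq l i hi, drop_prod_eq l (i + 1) h, ← mul_assoc]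
      exact ldvd_mul _ hd
    have hmem : s ∈ {d : M | LDvd d ((l.drop i).prod)} ∩ S := ⟨hdvd, hs⟩
    rw [← hpre i hi] at hmem
    exact hmem.1
  · intro hcov i hi
    have hc := chain l hcov i hi
    unfold Covers at hc
    rw [drop_prod_eq l i hi]
    exact hc.symm
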